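/- (Generalized Parry theorem) Let β = (β_n) be a Cantor real base. A sequence a ∈ ℕ^ℕ is the greedy β-expansion of some x ∈ [0,1) if and only if for all n ∈ ℕ, σ^n(a) <_lex d*_{β^{(n)}}(1). -/
import Mathlib


open Filter

/-- Product of the first `n+1` terms of the base sequence. -/
noncomputable def cprod (β : ℕ → ℝ) (n : ℕ) : ℝ := ∏ i ∈ Finset.range (n+1), β i

/-- A Cantor real base: all terms exceed 1 and the partial products tend to infinity. -/
def IsCantorBase (β : ℕ → ℝ) : Prop :=
  (∀ n, 1 < β n) ∧ Tendsto (cprod β) atTop atTop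

/-- Value of a real-digit sequence in a Cantor base. -/
noncomputable def valB (β : ℕ → ℝ) (a : ℕ → ℝ) : ℝ := ∑' n, a n / cprod β n

/-- Value of a natural-digit sequence in a Cantor base. -/
noncomputable def valN (β : ℕ → ℝ) (a : ℕ → ℕ) : ℝ := valB β (fun n => (a n : ℝ))

/-- Remainders of the greedy algorithm. -/
noncomputable def greedyRem (β : ℕ → ℝ) (x : ℝ) : ℕ → ℝ
  | 0 => β 0 * x - ⌊β 0 * x⌋
  | n+1 => β (n+1) * greedyRem β x n - ⌊β (n+1) * greedyRem β x n⌋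

/-- Digits of the greedy expansion. -/
noncomputable def greedy (β : ℕ → ℝ) (x : ℝ) : ℕ → ℕ
  | 0 => (⌊β 0 * x⌋).toNat
  | n+1 => (⌊β (n+1) * greedyRem β x n⌋).toNat

/-- Remainders of the quasi-greedy algorithm started at `1`:
at each step the largest digit keeping the remainder strictly positive is chosen. -/
noncomputable def qRem (β : ℕ → ℝ) : ℕ → ℝ
  | 0 => β 0 - (⌈β 0⌉ - 1)
  | n+1 => β (n+1) * qRem β n - (⌈β (n+1) * qRem β n⌉ - 1)

/-- Digits of the quasi-greedy expansion of `1`. -/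
noncomputable def quasiGreedy (β : ℕ → ℝ) : ℕ → ℕ
  | 0 => (⌈β 0⌉ - 1).toNat
  | n+1 => (⌈β (n+1) * qRem β n⌉ - 1).toNat

/-- The `n`-shifted base `β^{(n)}`. -/
def shiftBase (β : ℕ → ℝ) (n : ℕ) : ℕ → ℝ := fun k => β (n + k)

/-- The `n`-fold shift `σ^n` of a digit sequence. -/
def shiftSeq (a : ℕ → ℕ) (n : ℕ) : ℕ → ℕ := fun k => a (n + k)

/-- Strict lexicographic order on digit sequences. -/
def LexLt (a b : ℕ → ℕ) : Prop := ∃ ℓ, (∀ k, k < ℓ → a k = b k) ∧ a ℓ < b ℓ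

/-- Lexicographic order on digit sequences. -/
def LexLe (a b : ℕ → ℕ) : Prop := LexLt a b ∨ a = b

/-- The set of greedy expansions of points of `[0,1)`. -/
def Dset (β : ℕ → ℝ) : Set (ℕ → ℕ) := {a | ∃ x ∈ Set.Ico (0:ℝ) 1, a = greedy β x}

section Aux

open Finset

lemma cprod_pos {β : ℕ → ℝ} (hβ : ∀ n, 1 < β n) (n : ℕ) : 0 < cprod β n :=
  Finset.prod_pos fun i _ => lt_trans one_pos (hβ i)

lemma cprod_succ (β : ℕ → ℝ) (n : ℕ) : cprod β (n+1) = cprod β n * β (n+1) :=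
  Finset.prod_range_succ _ _

lemma cprod_zero (β : ℕ → ℝ) : cprod β 0 = β 0 := by
  show ∏ i ∈ Finset.range 1, β i = β 0
  exact Finset.prod_range_one (f := β)

lemma one_le_cprod {β : ℕ → ℝ} (hβ : ∀ n, 1 < β n) (n : ℕ) : 1 ≤ cprod β n := by
  induction n with
  | zero => rw [cprod_zero]; exact (hβ 0).le
  | succ n ih =>
      rw [cprod_succ]
      have := hβ (n+1)
      nlinarith

lemma toNat_cast_real {i : ℤ} (h : 0 ≤ i) : ((i.toNat : ℕ) : ℝ) = (i : ℝ) := by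
  rw [← Int.cast_natCast, Int.toNat_of_nonneg h]

lemma cprod_shift (β : ℕ → ℝ) (m k : ℕ) :
    cprod (shiftBase β m) k = ∏ i ∈ Finset.range (k+1), β (m + i) := rfl

lemma cprod_shift_zero (β : ℕ → ℝ) (m : ℕ) : cprod (shiftBase β m) 0 = β m := by
  rw [cprod_shift, Finset.prod_range_one, Nat.add_zero]

lemma cprod_shift_add (β : ℕ → ℝ) (m j k : ℕ) :
    cprod (shiftBase β m) (j + 1 + k) =
      cprod (shiftBase β m) j * cprod (shiftBase β (m + j + 1)) k := by
  rw [cprod_shift, cprod_shift, cprod_shift]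
  rw [show j + 1 + k + 1 = (j+1) + (k+1) by omega]
  rw [Finset.prod_range_add]
  congr 1
  apply Finset.prod_congr rfl
  intro i _
  congr 1
  omega

lemma isCantorBase_shift {β : ℕ → ℝ} (hβ : IsCantorBase β) (m : ℕ) :
    IsCantorBase (shiftBase β m) := by
  refine ⟨fun n => hβ.1 (m+n), ?_⟩
  have h0 : Tendsto (fun k : ℕ => m + k) atTop atTop :=
    tendsto_atTop_mono (fun k => Nat.le_add_left k m) tendsto_id
  have h1 : Tendsto (fun k => cprod β (m + k)) atTop atTop := hβ.2.comp h0
  have hQ : 0 < ∏ i ∈ Finset.range m, β i :=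
    Finset.prod_pos fun i _ => lt_trans one_pos (hβ.1 i)
  have h2 : Tendsto (fun k => cprod β (m+k) / (∏ i ∈ Finset.range m, β i)) atTop atTop :=
    h1.atTop_div_const hQ
  convert h2 using 2 with k
  rw [cprod_shift, eq_div_iff (ne_of_gt hQ)]
  have key : (∏ i ∈ Finset.range m, β i) * (∏ i ∈ Finset.range (k+1), β (m+i))
      = ∏ i ∈ Finset.range (m+(k+1)), β i := (Finset.prod_range_add β m (k+1)).symm
  show _ = cprod β (m + k)
  rw [cprod, show m + k + 1 = m + (k+1) by omega, ← key]
  ring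

lemma greedyRem_nonneg (β : ℕ → ℝ) (x : ℝ) (n : ℕ) : 0 ≤ greedyRem β x n := by
  cases n with
  | zero => exact sub_nonneg.2 (Int.floor_le _)
  | succ n => exact sub_nonneg.2 (Int.floor_le _)

lemma greedyRem_lt_one (β : ℕ → ℝ) (x : ℝ) (n : ℕ) : greedyRem β x n < 1 := by
  cases n with
  | zero =>
      have := Int.lt_floor_add_one (β 0 * x)
      show β 0 * x - _ < 1
      linarith
  | succ n =>
      have := Int.lt_floor_add_one (β (n+1) * greedyRem β x n)
      show β (n+1) * greedyRem β x n - _ < 1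
      linarith

lemma qRem_pos (β : ℕ → ℝ) (n : ℕ) : 0 < qRem β n := by
  cases n with
  | zero =>
      have := Int.ceil_lt_add_one (β 0)
      show 0 < β 0 - (_ - 1)
      linarith
  | succ n =>
      have := Int.ceil_lt_add_one (β (n+1) * qRem β n)
      show 0 < β (n+1) * qRem β n - (_ - 1)
      linarith

lemma qRem_le_one (β : ℕ → ℝ) (n : ℕ) : qRem β n ≤ 1 := by
  cases n with
  | zero =>
      have := Int.le_ceil (β 0)
      show β 0 - (_ - 1) ≤ 1
      linarith
  | succ n =>
      have := Int.le_ceil (β (n+1) * qRem β n)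
      show β (n+1) * qRem β n - (_ - 1) ≤ 1
      linarith

lemma quasi_zero_cast {β : ℕ → ℝ} (hβ : ∀ n, 1 < β n) :
    (quasiGreedy β 0 : ℝ) = β 0 - qRem β 0 := by
  have hpos : (0:ℝ) < β 0 := lt_trans one_pos (hβ 0)
  have h1 : (0:ℤ) < ⌈β 0⌉ := Int.ceil_pos.2 hpos
  show ((Int.toNat (⌈β 0⌉ - 1) : ℕ) : ℝ) = β 0 - (β 0 - (⌈β 0⌉ - 1))
  rw [toNat_cast_real (show (0:ℤ) ≤ ⌈β 0⌉ - 1 by omega)]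
  push_cast
  ring

lemma quasi_succ_cast {β : ℕ → ℝ} (hβ : ∀ n, 1 < β n) (n : ℕ) :
    (quasiGreedy β (n+1) : ℝ) = β (n+1) * qRem β n - qRem β (n+1) := by
  have hpos : (0:ℝ) < β (n+1) * qRem β n :=
    mul_pos (lt_trans one_pos (hβ (n+1))) (qRem_pos β n)
  have h1 : (0:ℤ) < ⌈β (n+1) * qRem β n⌉ := Int.ceil_pos.2 hpos
  show ((Int.toNat (⌈β (n+1) * qRem β n⌉ - 1) : ℕ) : ℝ)
      = β (n+1) * qRem β n - (β (n+1) * qRem β n - (⌈β (n+1) * qRem β n⌉ - 1))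
  rw [toNat_cast_real (show (0:ℤ) ≤ ⌈β (n+1) * qRem β n⌉ - 1 by omega)]
  push_cast
  ring

lemma greedy_zero_cast {β : ℕ → ℝ} {x : ℝ} (hβ : ∀ n, 1 < β n) (hx : 0 ≤ x) :
    (greedy β x 0 : ℝ) = β 0 * x - greedyRem β x 0 := by
  have h1 : (0:ℤ) ≤ ⌊β 0 * x⌋ :=
    Int.floor_nonneg.2 (mul_nonneg (le_trans zero_le_one (hβ 0).le) hx)
  show ((Int.toNat ⌊β 0 * x⌋ : ℕ) : ℝ) = β 0 * x - (β 0 * x - ⌊β 0 * x⌋)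
  rw [toNat_cast_real h1]
  ring

lemma greedy_succ_cast {β : ℕ → ℝ} {x : ℝ} (hβ : ∀ n, 1 < β n) (n : ℕ) :
    (greedy β x (n+1) : ℝ) = β (n+1) * greedyRem β x n - greedyRem β x (n+1) := by
  have h1 : (0:ℤ) ≤ ⌊β (n+1) * greedyRem β x n⌋ :=
    Int.floor_nonneg.2 (mul_nonneg (le_trans zero_le_one (hβ (n+1)).le)
      (greedyRem_nonneg β x n))
  show ((Int.toNat ⌊β (n+1) * greedyRem β x n⌋ : ℕ) : ℝ)
      = β (n+1) * greedyRem β x n - (β (n+1) * greedyRem β x n - ⌊β (n+1) * greedyRem β x n⌋)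
  rw [toNat_cast_real h1]
  ring

lemma div_mul_split (u c d : ℝ) (hc : c ≠ 0) (hd : d ≠ 0) :
    u / (c * d) = c⁻¹ * (u / d) := by
  field_simp

lemma floor_le_ceil_sub_one {u v : ℝ} (h : u < v) : ⌊u⌋ ≤ ⌈v⌉ - 1 := by
  have h1 : (⌊u⌋:ℝ) < (⌈v⌉:ℝ) :=
    lt_of_le_of_lt (Int.floor_le u) (lt_of_lt_of_le h (Int.le_ceil v))
  have h2 : ⌊u⌋ < ⌈v⌉ := by exact_mod_cast h1
  omega

lemma diff_formula {β : ℕ → ℝ} (hβ : ∀ n, 1 < β n) {x : ℝ} (hx0 : 0 ≤ x) :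
    ∀ n, (∀ k, k ≤ n → greedy β x k = quasiGreedy β k) →
      greedyRem β x n - qRem β n = cprod β n * (x - 1) := by
  intro n
  induction n with
  | zero =>
      intro h
      have h0 : ((greedy β x 0 : ℕ) : ℝ) = ((quasiGreedy β 0 : ℕ) : ℝ) := by
        rw [h 0 le_rfl]
      rw [greedy_zero_cast hβ hx0, quasi_zero_cast hβ] at h0
      rw [cprod_zero]
      linarith [h0]
  | succ n ih =>
      intro h
      have hih := ih (fun k hk => h k (le_trans hk (Nat.le_succ n)))
      have h0 : ((greedy β x (n+1) : ℕ) : ℝ) = ((quasiGreedy β (n+1) : ℕ) : ℝ) := by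
        rw [h (n+1) le_rfl]
      rw [greedy_succ_cast hβ, quasi_succ_cast hβ] at h0
      have key : greedyRem β x (n+1) - qRem β (n+1)
          = β (n+1) * (greedyRem β x n - qRem β n) := by linarith
      rw [key, hih, cprod_succ]
      ring

lemma lexLt_greedy_quasi (β : ℕ → ℝ) (hβ : IsCantorBase β) (x : ℝ)
    (hx0 : 0 ≤ x) (hx1 : x < 1) : LexLt (greedy β x) (quasiGreedy β) := by
  classical
  by_cases hall : ∀ k, greedy β x k = quasiGreedy β k
  · exfalso
    obtain ⟨n, hn⟩ := (hβ.2.eventually_ge_atTop (2 / (1 - x))).exists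
    have hd := diff_formula hβ.1 hx0 n (fun k _ => hall k)
    have h1 : 2 ≤ cprod β n * (1 - x) := by
      rwa [div_le_iff₀ (by linarith)] at hn
    have h2 : 0 ≤ greedyRem β x n := greedyRem_nonneg β x n
    have h3 : qRem β n ≤ 1 := qRem_le_one β n
    have h4 : cprod β n * (x - 1) = -(cprod β n * (1 - x)) := by ring
    rw [h4] at hd
    linarith
  · push_neg at hall
    have hex : ∃ k, greedy β x k ≠ quasiGreedy β k := hall
    set ℓ := Nat.find hex with hℓ
    have hspec : greedy β x ℓ ≠ quasiGreedy β ℓ := Nat.find_spec hex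
    have hpre : ∀ k, k < ℓ → greedy β x k = quasiGreedy β k := fun k hk =>
      not_not.1 (Nat.find_min hex hk)
    refine ⟨ℓ, hpre, ?_⟩
    have hle : greedy β x ℓ ≤ quasiGreedy β ℓ := by
      cases hc : ℓ with
      | zero =>
          have hu : β 0 * x < β 0 :=
            mul_lt_of_lt_one_right (lt_trans one_pos (hβ.1 0)) hx1
          show (⌊β 0 * x⌋).toNat ≤ (⌈β 0⌉ - 1).toNat
          exact Int.toNat_le_toNat (floor_le_ceil_sub_one hu)
      | succ m =>
          have hm : ∀ k, k ≤ m → greedy β x k = quasiGreedy β k := fun k hk =>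
            hpre k (by omega)
          have hd := diff_formula hβ.1 hx0 m hm
          have hrq : greedyRem β x m < qRem β m := by
            have : cprod β m * (x - 1) < 0 :=
              mul_neg_of_pos_of_neg (cprod_pos hβ.1 m) (by linarith)
            linarith
          have hu : β (m+1) * greedyRem β x m < β (m+1) * qRem β m :=
            mul_lt_mul_of_pos_left hrq (lt_trans one_pos (hβ.1 (m+1)))
          show (⌊β (m+1) * greedyRem β x m⌋).toNat
              ≤ (⌈β (m+1) * qRem β m⌉ - 1).toNat
          exact Int.toNat_le_toNat (floor_le_ceil_sub_one hu)
    exact lt_of_le_of_ne hle hspec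

lemma greedyRem_shift (β : ℕ → ℝ) (x : ℝ) (n : ℕ) :
    ∀ k, greedyRem (shiftBase β (n+1)) (greedyRem β x n) k = greedyRem β x (n+1+k)
  | 0 => by
      show shiftBase β (n+1) 0 * greedyRem β x n - _ = greedyRem β x (n+1)
      rfl
  | (k+1) => by
      show shiftBase β (n+1) (k+1) * greedyRem (shiftBase β (n+1)) (greedyRem β x n) k
          - (⌊shiftBase β (n+1) (k+1) * greedyRem (shiftBase β (n+1)) (greedyRem β x n) k⌋ : ℝ)
        = greedyRem β x (n+1+(k+1))
      rw [greedyRem_shift β x n k]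
      rfl

lemma greedy_shift (β : ℕ → ℝ) (x : ℝ) (n : ℕ) (k : ℕ) :
    greedy (shiftBase β (n+1)) (greedyRem β x n) k = greedy β x (n+1+k) := by
  cases k with
  | zero => rfl
  | succ k =>
      show (⌊shiftBase β (n+1) (k+1) * greedyRem (shiftBase β (n+1)) (greedyRem β x n) k⌋).toNat
        = greedy β x (n+1+(k+1))
      rw [greedyRem_shift β x n k]
      rfl

lemma quasi_partial_sum (β : ℕ → ℝ) (hβ : ∀ n, 1 < β n) :
    ∀ N, ∑ k ∈ Finset.range (N+1), (quasiGreedy β k : ℝ) / cprod β k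
      = 1 - qRem β N / cprod β N := by
  intro N
  induction N with
  | zero =>
      rw [Finset.sum_range_one, quasi_zero_cast hβ, cprod_zero]
      have h0 : β 0 ≠ 0 := by have := hβ 0; linarith
      field_simp
  | succ N ih =>
      rw [Finset.sum_range_succ, ih, quasi_succ_cast hβ, cprod_succ]
      have h1 : cprod β N ≠ 0 := ne_of_gt (cprod_pos hβ N)
      have h2 : β (N+1) ≠ 0 := by have := hβ (N+1); linarith
      field_simp
      ring

lemma qdiv_antitone_succ (β : ℕ → ℝ) (hβ : ∀ n, 1 < β n) (N : ℕ) :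
    qRem β (N+1) / cprod β (N+1) ≤ qRem β N / cprod β N := by
  have h0 : (0:ℝ) ≤ (quasiGreedy β (N+1) : ℝ) := Nat.cast_nonneg _
  have h1 : qRem β (N+1) ≤ β (N+1) * qRem β N := by
    have := quasi_succ_cast hβ N
    linarith
  have hc : 0 < cprod β N := cprod_pos hβ N
  have hb : 0 < β (N+1) := lt_trans one_pos (hβ (N+1))
  rw [cprod_succ]
  rw [div_le_div_iff₀ (by positivity) hc]
  calc qRem β (N+1) * cprod β N ≤ (β (N+1) * qRem β N) * cprod β N := by
        exact mul_le_mul_of_nonneg_right h1 hc.le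
    _ = qRem β N * (cprod β N * β (N+1)) := by ring

lemma qdiv_antitone (β : ℕ → ℝ) (hβ : ∀ n, 1 < β n) {M N : ℕ} (h : M ≤ N) :
    qRem β N / cprod β N ≤ qRem β M / cprod β M := by
  induction N with
  | zero =>
      have : M = 0 := Nat.le_zero.1 h
      subst this; exact le_rfl
  | succ N ih =>
      rcases Nat.lt_or_ge M (N+1) with h' | h'
      · exact le_trans (qdiv_antitone_succ β hβ N) (ih (by omega))
      · have : M = N+1 := by omega
        subst this; exact le_rfl

end Aux

theorem stmt_13 (β : ℕ → ℝ) (hβ : IsCantorBase β) (a : ℕ → ℕ) :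
    (∃ x ∈ Set.Ico (0:ℝ) 1, a = greedy β x) ↔
      ∀ n : ℕ, LexLt (shiftSeq a n) (quasiGreedy (shiftBase β n)) := by
  constructor
  · rintro ⟨x, ⟨hx0, hx1⟩, rfl⟩ n
    cases n with
    | zero =>
        have e1 : shiftSeq (greedy β x) 0 = greedy β x := funext fun k => by
          simp [shiftSeq]
        have e2 : shiftBase β 0 = β := funext fun k => by
          simp [shiftBase]
        rw [e1, e2]
        exact lexLt_greedy_quasi β hβ x hx0 hx1
    | succ n =>
        have e1 : shiftSeq (greedy β x) (n+1)
            = greedy (shiftBase β (n+1)) (greedyRem β x n) :=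
          funext fun k => (greedy_shift β x n k).symm
        rw [e1]
        exact lexLt_greedy_quasi _ (isCantorBase_shift hβ (n+1)) _
          (greedyRem_nonneg β x n) (greedyRem_lt_one β x n)
  · intro H
    simp only [LexLt, shiftSeq] at H
    choose L hL1 hL2 using H
    have hβ1 := hβ.1
    have hsh : ∀ m n, (1:ℝ) < shiftBase β m n := fun m n => hβ1 (m+n)
    set B : ℕ → ℝ := fun m =>
      1 - qRem (shiftBase β m) (L m) / cprod (shiftBase β m) (L m) with hB
    have hBlt : ∀ m, B m < 1 := by
      intro m
      have hq := qRem_pos (shiftBase β m) (L m)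
      have hc := cprod_pos (fun n => hsh m n) (L m)
      have hd : 0 < qRem (shiftBase β m) (L m) / cprod (shiftBase β m) (L m) :=
        div_pos hq hc
      simp only [hB]
      linarith
    have hB0 : ∀ m, 0 ≤ B m := by
      intro m
      have hq := qRem_le_one (shiftBase β m) (L m)
      have hc := one_le_cprod (fun n => hsh m n) (L m)
      have hd : qRem (shiftBase β m) (L m) / cprod (shiftBase β m) (L m) ≤ 1 :=
        (div_le_one (by linarith)).2 (le_trans hq hc)
      simp only [hB]
      linarith
    have key : ∀ M m,
        ∑ k ∈ Finset.range M, (a (m+k):ℝ) / cprod (shiftBase β m) k ≤ B m := by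
      intro M
      induction M using Nat.strong_induction_on with
      | _ M IH =>
        intro m
        rcases Nat.lt_or_ge M (L m + 1) with hM | hM
        · have hMle : M ≤ L m := by omega
          have hsum : ∑ k ∈ Finset.range M, (a (m+k):ℝ) / cprod (shiftBase β m) k
              = ∑ k ∈ Finset.range M,
                  (quasiGreedy (shiftBase β m) k : ℝ) / cprod (shiftBase β m) k :=
            Finset.sum_congr rfl fun k hk => by
              rw [hL1 m k (lt_of_lt_of_le (Finset.mem_range.1 hk) hMle)]
          rw [hsum]
          cases M with
          | zero => simpa using hB0 m
          | succ N =>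
              rw [quasi_partial_sum (shiftBase β m) (fun n => hsh m n) N]
              have hmono := qdiv_antitone (shiftBase β m) (fun n => hsh m n)
                (show N ≤ L m by omega)
              simp only [hB]
              linarith
        · obtain ⟨R, hR⟩ : ∃ R, M = L m + 1 + R := ⟨M - (L m + 1), by omega⟩
          subst hR
          rw [Finset.sum_range_add]
          have hcpos := cprod_pos (fun n => hsh m n) (L m)
          have hfirst : ∑ k ∈ Finset.range (L m + 1), (a (m+k):ℝ) / cprod (shiftBase β m) k
              ≤ 1 - qRem (shiftBase β m) (L m) / cprod (shiftBase β m) (L m)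
                - 1 / cprod (shiftBase β m) (L m) := by
            rw [Finset.sum_range_succ]
            have hpre : ∑ k ∈ Finset.range (L m), (a (m+k):ℝ) / cprod (shiftBase β m) k
                = ∑ k ∈ Finset.range (L m),
                    (quasiGreedy (shiftBase β m) k : ℝ) / cprod (shiftBase β m) k :=
              Finset.sum_congr rfl fun k hk => by
                rw [hL1 m k (Finset.mem_range.1 hk)]
            have hq := quasi_partial_sum (shiftBase β m) (fun n => hsh m n) (L m)
            rw [Finset.sum_range_succ] at hq
            have hdig : (a (m + L m) : ℝ) ≤ (quasiGreedy (shiftBase β m) (L m) : ℝ) - 1 := by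
              have h' : a (m + L m) + 1 ≤ quasiGreedy (shiftBase β m) (L m) := hL2 m
              have h'' : ((a (m + L m) + 1 : ℕ) : ℝ) ≤ ((quasiGreedy (shiftBase β m) (L m) : ℕ) : ℝ) := by
                exact_mod_cast h'
              push_cast at h''
              linarith
            have hdiv : (a (m + L m) : ℝ) / cprod (shiftBase β m) (L m)
                ≤ (quasiGreedy (shiftBase β m) (L m) : ℝ) / cprod (shiftBase β m) (L m)
                  - 1 / cprod (shiftBase β m) (L m) := by
              rw [← sub_div]
              exact div_le_div_of_nonneg_right hdig hcpos.le
            rw [hpre]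
            linarith
          have htail : ∑ k ∈ Finset.range R,
                (a (m + (L m + 1 + k)):ℝ) / cprod (shiftBase β m) (L m + 1 + k)
              ≤ 1 / cprod (shiftBase β m) (L m) := by
            have hrw : ∀ k, (a (m + (L m + 1 + k)):ℝ) / cprod (shiftBase β m) (L m + 1 + k)
                = (cprod (shiftBase β m) (L m))⁻¹ *
                    ((a ((m + L m + 1) + k):ℝ) / cprod (shiftBase β (m + L m + 1)) k) := by
              intro k
              rw [cprod_shift_add β m (L m) k,
                show m + (L m + 1 + k) = (m + L m + 1) + k by omega]
              exact div_mul_split _ _ _ (ne_of_gt hcpos)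
                (ne_of_gt (cprod_pos (fun n => hsh (m + L m + 1) n) k))
            rw [Finset.sum_congr rfl (fun k _ => hrw k), ← Finset.mul_sum]
            have hIH : ∑ k ∈ Finset.range R,
                (a ((m + L m + 1) + k):ℝ) / cprod (shiftBase β (m + L m + 1)) k
                ≤ B (m + L m + 1) := IH R (by omega) (m + L m + 1)
            have hB1 : B (m + L m + 1) ≤ 1 := (hBlt _).le
            calc (cprod (shiftBase β m) (L m))⁻¹ * ∑ k ∈ Finset.range R,
                  (a ((m + L m + 1) + k):ℝ) / cprod (shiftBase β (m + L m + 1)) k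
                ≤ (cprod (shiftBase β m) (L m))⁻¹ * 1 :=
                  mul_le_mul_of_nonneg_left (le_trans hIH hB1) (inv_nonneg.2 hcpos.le)
              _ = 1 / cprod (shiftBase β m) (L m) := by rw [mul_one, one_div]
          simp only [hB]
          linarith
    have hsummable : ∀ m, Summable (fun k => (a (m+k):ℝ) / cprod (shiftBase β m) k) := by
      intro m
      apply summable_of_sum_range_le (c := B m)
      · intro k
        exact div_nonneg (Nat.cast_nonneg _) (cprod_pos (fun n => hsh m n) k).le
      · intro M
        exact key M m
    have hval : ∀ m, valN (shiftBase β m) (shiftSeq a m)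
        = ∑' k, (a (m+k):ℝ) / cprod (shiftBase β m) k := fun m => rfl
    have hle : ∀ m, valN (shiftBase β m) (shiftSeq a m) ≤ B m := by
      intro m
      rw [hval m]
      exact Summable.tsum_le_of_sum_range_le (hsummable m) (fun M => key M m)
    have hnn : ∀ m, 0 ≤ valN (shiftBase β m) (shiftSeq a m) := by
      intro m
      rw [hval m]
      exact tsum_nonneg fun k =>
        div_nonneg (Nat.cast_nonneg _) (cprod_pos (fun n => hsh m n) k).le
    have hrec : ∀ m, β m * valN (shiftBase β m) (shiftSeq a m)
        = a m + valN (shiftBase β (m+1)) (shiftSeq a (m+1)) := by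
      intro m
      have hbm : (0:ℝ) < β m := lt_trans one_pos (hβ1 m)
      rw [hval m, hval (m+1)]
      rw [Summable.tsum_eq_zero_add (hsummable m)]
      have h0 : (a (m+0):ℝ) / cprod (shiftBase β m) 0 = (a m : ℝ) / β m := by
        rw [cprod_shift_zero, Nat.add_zero]
      have hterm : ∀ k, (a (m+(k+1)):ℝ) / cprod (shiftBase β m) (k+1)
          = (β m)⁻¹ * ((a ((m+1)+k):ℝ) / cprod (shiftBase β (m+1)) k) := by
        intro k
        have hca := cprod_shift_add β m 0 k
        rw [cprod_shift_zero] at hca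
        rw [show m + (k+1) = (m+1)+k by omega, show (k+1 : ℕ) = 0+1+k by omega, hca,
          show m + 0 + 1 = m + 1 by omega]
        exact div_mul_split _ _ _ (ne_of_gt hbm)
          (ne_of_gt (cprod_pos (fun n => hsh (m+1) n) k))
      rw [h0, tsum_congr hterm, tsum_mul_left]
      field_simp
    refine ⟨valN (shiftBase β 0) (shiftSeq a 0),
      ⟨hnn 0, lt_of_le_of_lt (hle 0) (hBlt 0)⟩, ?_⟩
    set x := valN (shiftBase β 0) (shiftSeq a 0) with hx
    have main : ∀ n, greedy β x n = a n ∧ greedyRem β x n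
        = valN (shiftBase β (n+1)) (shiftSeq a (n+1)) := by
      intro n
      induction n with
      | zero =>
          have h := hrec 0
          rw [← hx] at h
          have hy0 := hnn (0+1)
          have hy1 := lt_of_le_of_lt (hle (0+1)) (hBlt (0+1))
          have hfl : ⌊β 0 * x⌋ = (a 0 : ℤ) := by
            rw [Int.floor_eq_iff]
            constructor
            · push_cast
              linarith
            · push_cast
              linarith
          constructor
          · show (⌊β 0 * x⌋).toNat = a 0
            rw [hfl]
            exact Int.toNat_natCast _
          · show β 0 * x - (⌊β 0 * x⌋ : ℝ) = _
            rw [hfl]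
            push_cast
            linarith
      | succ n ih =>
          have h := hrec (n+1)
          rw [← ih.2] at h
          have hy0 := hnn (n+1+1)
          have hy1 := lt_of_le_of_lt (hle (n+1+1)) (hBlt (n+1+1))
          have hfl : ⌊β (n+1) * greedyRem β x n⌋ = (a (n+1) : ℤ) := by
            rw [Int.floor_eq_iff]
            constructor
            · push_cast
              linarith
            · push_cast
              linarith
          constructor
          · show (⌊β (n+1) * greedyRem β x n⌋).toNat = a (n+1)
            rw [hfl]
            exact Int.toNat_natCast _
          · show β (n+1) * greedyRem β x n - (⌊β (n+1) * greedyRem β x n⌋ : ℝ) = _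
            rw [hfl]
            push_cast
            linarith
    funext n
    exact (main n).1.symm
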